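/- Let R be a sieve over an étale ℚ-algebra K (not assumed Erdős) and (I_N) any Følner sequence in O_K. Then the upper density of the R-free numbers satisfies d̄_I(F_R) ≤ ∏_{i≥1} (1 − |R_i|/N(𝔟_i)). -/

import Mathlib

open Filter Topology MeasureTheory Pointwise symmDiff

noncomputable section

namespace ErdosSieve

variable {O : Type} [CommRing O]

/-- A sieve over (the ring of integers of) an étale `ℚ`-algebra: a sequence of pairwise
coprime invertible (i.e. finite-quotient) ideals `b i` together with, for each `i`, a finite
set `gen i` of representatives, so that the sieved-out set is `R_i = gen i + b i`, which is
required to be a proper subset of the ring. -/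
structure Sieve (O : Type) [CommRing O] : Type where
  b : ℕ → Ideal O
  gen : ℕ → Finset O
  coprime : ∀ i j, i ≠ j → b i ⊔ b j = ⊤
  finQuot : ∀ i, Finite (O ⧸ b i)
  ne_univ : ∀ i, (↑(gen i) : Set O) + (↑(b i) : Set O) ≠ Set.univ

/-- The `i`-th sieved-out set `R_i = gen i + b i`. -/
def Sieve.RSet (S : Sieve O) (i : ℕ) : Set O := (↑(S.gen i) : Set O) + (↑(S.b i) : Set O)

/-- The set `F_R` of `R`-free numbers. -/
def Sieve.FR (S : Sieve O) : Set O := (⋃ i, S.RSet i)ᶜ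

/-- The norm `N(b i)` of the `i`-th ideal. -/
def Sieve.normb (S : Sieve O) (i : ℕ) : ℕ := Nat.card (O ⧸ S.b i)

/-- The number `|R_i|` of residue classes modulo `b i` met by `R_i`. -/
def Sieve.cardR (S : Sieve O) (i : ℕ) : ℕ :=
  Nat.card ((Ideal.Quotient.mk (S.b i)) '' (S.RSet i))

/-- A sieve is Erdős if `∑ |R_i| / N(b_i) < ∞`. -/
def Sieve.IsErdos (S : Sieve O) : Prop :=
  Summable fun i => (S.cardR i : ℝ) / (S.normb i : ℝ)

/-- A Følner sequence: finite nonempty subsets of `O` which are asymptotically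
translation-invariant. -/
def IsFolner (I : ℕ → Set O) : Prop :=
  (∀ N, (I N).Finite) ∧ (∀ N, (I N).Nonempty) ∧
    ∀ x : O, Tendsto
      (fun N => (Nat.card ↥(((x + ·) '' I N) ∆ (I N)) : ℝ) / (Nat.card ↥(I N) : ℝ))
      atTop (𝓝 0)

/-- Upper density along a (Følner) sequence. -/
def upperDensity (I : ℕ → Set O) (A : Set O) : ℝ :=
  limsup (fun N => (Nat.card ↥(A ∩ I N) : ℝ) / (Nat.card ↥(I N) : ℝ)) atTop

/-- `A` has density `d` along the sequence `I`. -/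
def HasDensity (I : ℕ → Set O) (A : Set O) (d : ℝ) : Prop :=
  Tendsto (fun N => (Nat.card ↥(A ∩ I N) : ℝ) / (Nat.card ↥(I N) : ℝ)) atTop (𝓝 d)

/-- `⋃_{i ≥ L} R i`. -/
def unionGe (R : ℕ → Set O) (L : ℕ) : Set O := ⋃ i, ⋃ (_ : L ≤ i), R i

/-- `⋃_{i < L} R i`. -/
def unionLt (R : ℕ → Set O) (L : ℕ) : Set O := ⋃ i, ⋃ (_ : i < L), R i

/-- The weak light tails property for a family of sieved-out sets:
`limsup`-density of `⋃_{i ≥ L} R_i ∖ ⋃_{j < L} R_j` tends to `0` as `L → ∞`. -/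
def WeakLightTailsFam (I : ℕ → Set O) (R : ℕ → Set O) : Prop :=
  Tendsto (fun L => upperDensity I (unionGe R L \ unionLt R L)) atTop (𝓝 0)

/-- The strong light tails property for a family of sieved-out sets. -/
def StrongLightTailsFam (I : ℕ → Set O) (R : ℕ → Set O) : Prop :=
  Tendsto (fun L => upperDensity I (unionGe R L)) atTop (𝓝 0)

/-- A sieve has weak light tails for `I` if it is Erdős and the tail differences have
vanishing upper density. -/
def Sieve.HasWeakLightTails (S : Sieve O) (I : ℕ → Set O) : Prop :=
  S.IsErdos ∧ WeakLightTailsFam I S.RSet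

/-- A sieve has strong light tails for `I` if it is Erdős and the tails have vanishing
upper density. -/
def Sieve.HasStrongLightTails (S : Sieve O) (I : ℕ → Set O) : Prop :=
  S.IsErdos ∧ StrongLightTailsFam I S.RSet

/-- The infinite product `∏_i (1 - |R_i|/N(b_i))`, realized as the infimum of the
(nonincreasing) sequence of partial products, i.e. as its limit. -/
def Sieve.prodDensity (S : Sieve O) : ℝ :=
  ⨅ L : ℕ, ∏ i ∈ Finset.range L, (1 - (S.cardR i : ℝ) / (S.normb i : ℝ))

/-- `A` is an `R`-admissible set: `-A + R_i ≠ O` for all `i`. -/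
def Sieve.Admissible (S : Sieve O) (A : Set O) : Prop :=
  ∀ i, -A + S.RSet i ≠ Set.univ

/-- The number `|-A + R_i|` of residue classes modulo `b i` met by `-A + R_i`. -/
def Sieve.cardShift (S : Sieve O) (A : Set O) (i : ℕ) : ℕ :=
  Nat.card ((Ideal.Quotient.mk (S.b i)) '' (-A + S.RSet i))

/-- The infinite product `∏_i (1 - |-A + R_i|/N(b_i))` (as the infimum of the
partial products). -/
def Sieve.prodDensityShift (S : Sieve O) (A : Set O) : ℝ :=
  ⨅ L : ℕ, ∏ i ∈ Finset.range L, (1 - (S.cardShift A i : ℝ) / (S.normb i : ℝ))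

/-- A subset `Y` of `O` is syndetic if finitely many translates of it cover `O`. -/
def Syndetic (Y : Set O) : Prop := ∃ C : Finset O, Y + (↑C : Set O) = Set.univ

-- Indicator of a subset of `O`, i.e. a point of the shift space `{0,1}^O`.
open Classical in
def chiSet (A : Set O) : O → Bool := fun x => if x ∈ A then true else false

/-- The shift action `S_a(A) = A - a` on `{0,1}^O`: `χ_{A - a}(x) = χ_A (x + a)`. -/
def shiftB (a : O) (f : O → Bool) : O → Bool := fun x => f (x + a)

/-- The odometer group `G_R = ∏ i, O ⧸ b i`. -/
abbrev Sieve.GR (S : Sieve O) : Type := ∀ i : ℕ, O ⧸ S.b i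

-- The map `φ_R : G_R → {0,1}^O`: `a ∈ φ_R(g)` iff `a + g i` avoids (the image of) `R_i`
-- modulo `b i` for every `i`.
open Classical in
def Sieve.phiB (S : Sieve O) (g : S.GR) : O → Bool := fun a =>
  if (∀ i, (Ideal.Quotient.mk (S.b i) a + g i) ∉ (Ideal.Quotient.mk (S.b i)) '' (S.RSet i))
  then true else false

/-- The Mirsky measure `ν_R` on `{0,1}^O`: the pushforward under `φ_R` of the Haar
probability measure of the compact group `G_R` (each factor being finite and discrete,
and the Haar measure being normalized so that the whole group has measure `1`). -/
def Sieve.mirsky (S : Sieve O) : Measure (O → Bool) := by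
  letI : ∀ i, TopologicalSpace (O ⧸ S.b i) := fun _ => ⊥
  haveI : ∀ i, DiscreteTopology (O ⧸ S.b i) := fun _ => ⟨rfl⟩
  haveI : ∀ i, Finite (O ⧸ S.b i) := S.finQuot
  haveI : ∀ i, IsTopologicalAddGroup (O ⧸ S.b i) := fun i => { }
  letI : MeasurableSpace S.GR := borel _
  haveI : BorelSpace S.GR := ⟨rfl⟩
  exact Measure.map S.phiB (Measure.addHaarMeasure (G := S.GR) ⊤)

/-- The ring of integers of the étale `ℚ`-algebra `K 0 × ⋯ × K (m-1)`. -/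
abbrev OK {m : ℕ} (K : Fin m → Type) [∀ j, Field (K j)] [∀ j, NumberField (K j)] : Type :=
  ∀ j, NumberField.RingOfIntegers (K j)

variable {m : ℕ} (K : Fin m → Type) [∀ j, Field (K j)] [∀ j, NumberField (K j)]

/-- The "ball" `B_N` in `O_K`: elements all of whose archimedean embeddings have absolute
value at most `N` (the max over embeddings of all the number-field components). -/
def ball (N : ℕ) : Set (OK K) :=
  {x | ∀ j, ∀ φ : K j →+* ℂ,
    ‖φ (algebraMap (NumberField.RingOfIntegers (K j)) (K j) (x j))‖ ≤ N}

section Aux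

variable {O' : Type} [CommRing O']

open Set in
lemma ncard_shift_inter_le (C J : Set O') (hJ : J.Finite) (y : O') :
    ((y + ·) '' C ∩ J).ncard ≤ (C ∩ J).ncard + (((y + ·) '' J) ∆ J).ncard := by
  have hinj : Function.Injective (fun x : O' => y + x) := fun a b h => by
    simpa using h
  have hsub : (y + ·) '' C ∩ J ⊆ ((y + ·) '' (C ∩ J)) ∪ (((y + ·) '' J) ∆ J) := by
    rintro x ⟨⟨c, hc, rfl⟩, hxJ⟩
    by_cases h : c ∈ J
    · exact Or.inl ⟨c, ⟨hc, h⟩, rfl⟩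
    · refine Or.inr (Set.mem_symmDiff.2 (Or.inr ⟨hxJ, ?_⟩))
      rintro ⟨c', hc', he⟩
      exact h (by simpa [hinj he] using hc')
  have hfin1 : ((y + ·) '' (C ∩ J)).Finite :=
    ((hJ.subset Set.inter_subset_right).image _)
  have hfin2 : (((y + ·) '' J) ∆ J).Finite :=
    ((hJ.image _).union hJ).subset symmDiff_le_sup
  calc ((y + ·) '' C ∩ J).ncard
      ≤ (((y + ·) '' (C ∩ J)) ∪ (((y + ·) '' J) ∆ J)).ncard :=
        Set.ncard_le_ncard hsub (hfin1.union hfin2)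
    _ ≤ ((y + ·) '' (C ∩ J)).ncard + (((y + ·) '' J) ∆ J).ncard :=
        Set.ncard_union_le _ _
    _ = (C ∩ J).ncard + (((y + ·) '' J) ∆ J).ncard := by
        rw [Set.ncard_image_of_injective _ hinj]

lemma exists_shift_fiber (H : Ideal O') (g g' : O' ⧸ H) :
    ∃ y : O', (y + ·) '' ((Ideal.Quotient.mk H) ⁻¹' {g}) = (Ideal.Quotient.mk H) ⁻¹' {g'} := by
  obtain ⟨y, hy⟩ := Ideal.Quotient.mk_surjective (g' - g)
  refine ⟨y, ?_⟩
  ext x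
  simp only [Set.mem_image, Set.mem_preimage, Set.mem_singleton_iff]
  constructor
  · rintro ⟨c, hc, rfl⟩
    rw [map_add, hy, hc]; ring
  · intro hx
    exact ⟨x - y, by rw [map_sub, hx, hy]; ring, by ring⟩

lemma upperDensity_le_card_div (H : Ideal O') (hfin : Finite (O' ⧸ H)) (T : Set (O' ⧸ H))
    (A : Set O') (hA : A ⊆ (Ideal.Quotient.mk H) ⁻¹' T)
    (I : ℕ → Set O') (hI : IsFolner I) :
    upperDensity I A ≤ (Nat.card T : ℝ) / (Nat.card (O' ⧸ H) : ℝ) := by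
  classical
  haveI := hfin
  haveI := Fintype.ofFinite (O' ⧸ H)
  set π := Ideal.Quotient.mk H with hπ
  choose y hy using fun g g' : O' ⧸ H => exists_shift_fiber H g g'
  set n := Nat.card (O' ⧸ H) with hn
  have hn0 : 0 < n := Nat.card_pos
  have hn0' : (0 : ℝ) < n := by exact_mod_cast hn0
  set c : (O' ⧸ H) → ℕ → ℕ := fun g N => (π ⁻¹' {g} ∩ I N).ncard with hc
  set D : (O' ⧸ H) → (O' ⧸ H) → ℕ → ℕ :=
    fun g g' N => (((y g g' + ·) '' I N) ∆ I N).ncard with hD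
  have key2 : ∀ g g' N, c g' N ≤ c g N + D g g' N := by
    intro g g' N
    calc c g' N = ((y g g' + ·) '' (π ⁻¹' {g}) ∩ I N).ncard := by rw [hy]
      _ ≤ _ := ncard_shift_inter_le _ _ (hI.1 N) _
  -- fiberwise counting
  have hJset : ∀ N (U : Set (O' ⧸ H)),
      (π ⁻¹' U ∩ I N).ncard = ((hI.1 N).toFinset.filter fun x => π x ∈ U).card := by
    intro N U
    have : π ⁻¹' U ∩ I N = ↑((hI.1 N).toFinset.filter fun x => π x ∈ U) := by
      ext x
      simp [Set.Finite.mem_toFinset, and_comm]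
    rw [this, Set.ncard_coe_finset]
  have key1 : ∀ N, ∑ g : O' ⧸ H, c g N = (I N).ncard := by
    intro N
    have h1 : (I N).ncard = (hI.1 N).toFinset.card := Set.ncard_eq_toFinset_card _ (hI.1 N)
    rw [h1, Finset.card_eq_sum_card_fiberwise (f := π) (t := Finset.univ)
      (fun x _ => Finset.mem_univ (π x))]
    refine Finset.sum_congr rfl fun g _ => ?_
    rw [hc]
    have := hJset N {g}
    simpa using this
  have keyT : ∀ N, (π ⁻¹' T ∩ I N).ncard = ∑ g ∈ T.toFinset, c g N := by
    intro N
    rw [hJset N T]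
    rw [Finset.card_eq_sum_card_fiberwise (f := π) (t := T.toFinset)
      (fun x hx => by simpa using (Finset.mem_filter.1 hx).2)]
    refine Finset.sum_congr rfl fun g hg => ?_
    have hgT : g ∈ T := by simpa using hg
    have hfil : ((hI.1 N).toFinset.filter fun x => π x ∈ T).filter (fun x => π x = g)
        = (hI.1 N).toFinset.filter fun x => π x = g := by
      rw [Finset.filter_filter]
      refine Finset.filter_congr fun x _ => ?_
      constructor
      · rintro ⟨_, h⟩; exact h
      · intro h; exact ⟨h ▸ hgT, h⟩
    rw [hfil, hc]
    have := hJset N {g}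
    simpa using this.symm
  have key3 : ∀ g N, (n : ℝ) * c g N ≤ ((I N).ncard : ℝ) + ∑ g' : O' ⧸ H, (D g' g N : ℝ) := by
    intro g N
    have : (n : ℝ) * c g N = ∑ _g' : O' ⧸ H, (c g N : ℝ) := by
      rw [Finset.sum_const, Finset.card_univ, ← Nat.card_eq_fintype_card, ← hn, nsmul_eq_mul]
    rw [this]
    calc ∑ _g' : O' ⧸ H, (c g N : ℝ) ≤ ∑ g' : O' ⧸ H, ((c g' N : ℝ) + D g' g N) := by
          refine Finset.sum_le_sum fun g' _ => ?_
          exact_mod_cast key2 g' g N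
      _ = ((I N).ncard : ℝ) + ∑ g' : O' ⧸ H, (D g' g N : ℝ) := by
          rw [Finset.sum_add_distrib]
          congr 1
          exact_mod_cast congrArg (Nat.cast (R := ℝ)) (key1 N)
  set iN : ℕ → ℝ := fun N => ((I N).ncard : ℝ) with hiNdef
  have hiN : ∀ N, 0 < iN N := by
    intro N
    have : 0 < (I N).ncard := (Set.ncard_pos (hI.1 N)).2 (hI.2.1 N)
    simp only [hiNdef]
    exact_mod_cast this
  set W : ℕ → ℝ := fun N => ∑ g ∈ T.toFinset, ∑ g' : O' ⧸ H, (D g' g N : ℝ) with hW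
  have hcardT : (T.toFinset.card : ℝ) = (Nat.card T : ℝ) := by
    rw [Nat.card_coe_set_eq, Set.ncard_eq_toFinset_card']
  have hTN : ∀ N, ((π ⁻¹' T ∩ I N).ncard : ℝ) * n ≤ (Nat.card T : ℝ) * iN N + W N := by
    intro N
    have : ((π ⁻¹' T ∩ I N).ncard : ℝ) = ∑ g ∈ T.toFinset, (c g N : ℝ) := by
      exact_mod_cast congrArg (Nat.cast (R := ℝ)) (keyT N)
    rw [this, Finset.sum_mul]
    calc ∑ g ∈ T.toFinset, (c g N : ℝ) * n
        = ∑ g ∈ T.toFinset, (n : ℝ) * c g N := by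
          refine Finset.sum_congr rfl fun g _ => by ring
      _ ≤ ∑ g ∈ T.toFinset, (iN N + ∑ g' : O' ⧸ H, (D g' g N : ℝ)) :=
          Finset.sum_le_sum fun g _ => key3 g N
      _ = (Nat.card T : ℝ) * iN N + W N := by
          rw [Finset.sum_add_distrib, Finset.sum_const, nsmul_eq_mul, hcardT]
  set u : ℕ → ℝ := fun N => (Nat.card ↥(A ∩ I N) : ℝ) / (Nat.card ↥(I N) : ℝ) with hu
  set v : ℕ → ℝ := fun N => (Nat.card T : ℝ) / n + (1 / n) * (W N / iN N) with hv
  have huv : ∀ N, u N ≤ v N := by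
    intro N
    have hAcount : (Nat.card ↥(A ∩ I N) : ℝ) ≤ ((π ⁻¹' T ∩ I N).ncard : ℝ) := by
      rw [Nat.card_coe_set_eq]
      exact_mod_cast Set.ncard_le_ncard (Set.inter_subset_inter_left _ hA)
        ((hI.1 N).subset (Set.inter_subset_right))
    have hIcount : (Nat.card ↥(I N) : ℝ) = iN N := by rw [Nat.card_coe_set_eq]
    rw [hu]
    simp only
    rw [hIcount, div_le_iff₀ (hiN N)]
    have hW0 : 0 ≤ W N := by
      refine Finset.sum_nonneg fun g _ => Finset.sum_nonneg fun g' _ => by positivity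
    have h1 : ((π ⁻¹' T ∩ I N).ncard : ℝ) ≤ ((Nat.card T : ℝ) * iN N + W N) / n := by
      rw [le_div_iff₀ hn0']
      exact hTN N
    have h2 : v N * iN N = ((Nat.card T : ℝ) * iN N + W N) / n := by
      have hne : (n : ℝ) ≠ 0 := hn0'.ne'
      have hiNe : iN N ≠ 0 := (hiN N).ne'
      rw [hv]
      field_simp
    rw [h2]
    exact hAcount.trans h1
  have hWtend : Tendsto (fun N => W N / iN N) atTop (𝓝 0) := by
    have : (fun N => W N / iN N)
        = fun N => ∑ g ∈ T.toFinset, ∑ g' : O' ⧸ H, ((D g' g N : ℝ) / iN N) := by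
      funext N
      rw [hW]
      simp only
      rw [Finset.sum_div]
      refine Finset.sum_congr rfl fun g _ => ?_
      rw [Finset.sum_div]
    rw [this]
    have h0 : (0 : ℝ) = ∑ _g ∈ T.toFinset, ∑ _g' : O' ⧸ H, (0 : ℝ) := by simp
    rw [h0]
    refine tendsto_finset_sum _ fun g _ => ?_
    refine tendsto_finset_sum _ fun g' _ => ?_
    have := hI.2.2 (y g' g)
    have heq : (fun N => ((D g' g N : ℝ) / iN N))
        = fun N => (Nat.card ↥(((y g' g + ·) '' I N) ∆ I N) : ℝ) / (Nat.card ↥(I N) : ℝ) := by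
      funext N
      rw [hD, hiNdef]
      simp only
      rw [Nat.card_coe_set_eq, Nat.card_coe_set_eq]
    rw [heq]
    exact this
  have hvtend : Tendsto v atTop (𝓝 ((Nat.card T : ℝ) / n)) := by
    have : Tendsto (fun N => (1 / (n : ℝ)) * (W N / iN N)) atTop (𝓝 ((1 / n) * 0)) :=
      (tendsto_const_nhds).mul hWtend
    rw [mul_zero] at this
    have h2 := (tendsto_const_nhds (x := (Nat.card ↑T : ℝ) / n) (f := atTop)).add this
    rw [add_zero] at h2
    exact h2
  have hu0 : ∀ N, 0 ≤ u N := fun N => by positivity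
  calc upperDensity I A = limsup u atTop := rfl
    _ ≤ limsup v atTop := by
        refine limsup_le_limsup (Eventually.of_forall huv) ?_ ?_
        · exact isCoboundedUnder_le_of_le atTop hu0
        · exact hvtend.isBoundedUnder_le
    _ = (Nat.card T : ℝ) / n := hvtend.limsup_eq

lemma mem_RSet_of_mk_eq (S : Sieve O') (i : ℕ) {x r : O'}
    (hr : r ∈ S.RSet i) (h : Ideal.Quotient.mk (S.b i) x = Ideal.Quotient.mk (S.b i) r) :
    x ∈ S.RSet i := by
  obtain ⟨s, hs, b, hb, rfl⟩ := hr
  have hxr : x - (s + b) ∈ S.b i := Ideal.Quotient.eq.mp h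
  refine ⟨s, hs, b + (x - (s + b)), ?_, by ring⟩
  exact (S.b i).add_mem hb hxr

end Aux

set_option maxHeartbeats 2000000 in
/-- **The upper density of `F_R` is at most `∏ (1 - |R_i|/N(b_i))`** for every sieve `R`
(not necessarily Erdős) and every Følner sequence. -/
theorem upperDensity_FR_le_prod
    {m : ℕ} (hm : 0 < m) (K : Fin m → Type) [∀ j, Field (K j)]
    [∀ j, NumberField (K j)]
    (S : Sieve (OK K)) (I : ℕ → Set (OK K)) (hI : IsFolner I) :
    upperDensity I S.FR ≤ S.prodDensity := by
  classical
  refine le_ciInf fun L => ?_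
  set f : Fin L → Ideal (OK K) := fun i => S.b i with hf
  letI : ∀ i : Fin L, Finite ((OK K) ⧸ f i) := fun i => S.finQuot i
  have hcop : Pairwise (Function.onFun IsCoprime f) := by
    intro i j hij
    exact Ideal.isCoprime_iff_sup_eq.mpr (S.coprime i j fun h => hij (Fin.val_injective h))
  set e := Ideal.quotientInfRingEquivPiQuotient f hcop with he
  haveI hfinH : Finite ((OK K) ⧸ ⨅ i, f i) := Finite.of_equiv _ e.toEquiv.symm
  set T : Set ((OK K) ⧸ ⨅ i, f i) :=
    {q | ∀ i : Fin L, e q i ∉ (Ideal.Quotient.mk (f i)) '' (S.RSet i)} with hT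
  have hemk : ∀ (x : OK K) (i : Fin L),
      e (Ideal.Quotient.mk (⨅ i, f i) x) i = Ideal.Quotient.mk (f i) x := by
    intro x i
    exact Ideal.quotientInfToPiQuotient_mk' f x i
  have hsub : S.FR ⊆ (Ideal.Quotient.mk (⨅ i, f i)) ⁻¹' T := by
    intro x hx
    simp only [Set.mem_preimage, hT, Set.mem_setOf_eq]
    intro i
    rw [hemk]
    rintro ⟨r, hr, hrx⟩
    exact hx (Set.mem_iUnion.2 ⟨i, mem_RSet_of_mk_eq S i hr hrx.symm⟩)
  have hbound := upperDensity_le_card_div (⨅ i, f i) hfinH T S.FR hsub I hI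
  refine hbound.trans ?_
  -- cardinality computations
  have hn : ∀ i : Fin L, 0 < S.normb i := by
    intro i
    haveI := S.finQuot i
    exact Nat.card_pos
  have hcompl : ∀ i : Fin L,
      S.cardR i ≤ S.normb i ∧
      (((Ideal.Quotient.mk (f i)) '' (S.RSet i))ᶜ).ncard = S.normb i - S.cardR i := by
    intro i
    haveI := S.finQuot i
    have h := Set.ncard_add_ncard_compl ((Ideal.Quotient.mk (f i)) '' (S.RSet i))
      (Set.toFinite _) (Set.toFinite _)
    have hc : S.cardR i = ((Ideal.Quotient.mk (f i)) '' (S.RSet i)).ncard := by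
      rw [Sieve.cardR, Nat.card_coe_set_eq]
    have hnb : S.normb i = Nat.card ((OK K) ⧸ f i) := rfl
    constructor
    · rw [hc, hnb]; omega
    · rw [hc, hnb]; omega
  set P : Set (∀ i : Fin L, (OK K) ⧸ f i) :=
    Set.pi Set.univ (fun i => ((Ideal.Quotient.mk (f i)) '' (S.RSet i))ᶜ) with hP
  have hTpre : T = ⇑e ⁻¹' P := by
    ext q
    simp [hT, hP, Set.mem_pi]
  have hcardT : Nat.card T = ∏ i : Fin L, (S.normb i - S.cardR i) := by
    have h1 : Nat.card ↥(⇑e '' (⇑e ⁻¹' P)) = Nat.card ↥(⇑e ⁻¹' P) :=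
      Nat.card_image_of_injective e.injective _
    have h2 : ⇑e '' (⇑e ⁻¹' P) = P := Set.image_preimage_eq P e.surjective
    rw [hTpre, ← h1, h2]
    rw [Nat.card_congr (Equiv.Set.univPi _), Nat.card_pi]
    refine Finset.prod_congr rfl fun i _ => ?_
    haveI := S.finQuot i
    rw [Nat.card_coe_set_eq, (hcompl i).2]
  have hcardG : Nat.card ((OK K) ⧸ ⨅ i, f i) = ∏ i : Fin L, S.normb i := by
    rw [Nat.card_congr e.toEquiv, Nat.card_pi]
    rfl
  rw [hcardT, hcardG]
  have hkey : ∀ i : Fin L, ((S.normb i - S.cardR i : ℕ) : ℝ)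
      = (1 - (S.cardR i : ℝ) / (S.normb i : ℝ)) * (S.normb i : ℝ) := by
    intro i
    have h1 := (hcompl i).1
    have h2 : (0 : ℝ) < (S.normb i : ℝ) := by exact_mod_cast hn i
    rw [Nat.cast_sub h1]
    field_simp
  have hprodpos : (0 : ℝ) < ∏ i : Fin L, (S.normb i : ℝ) :=
    Finset.prod_pos fun i _ => by exact_mod_cast hn i
  rw [Nat.cast_prod, Nat.cast_prod]
  calc (∏ i : Fin L, ((S.normb i - S.cardR i : ℕ) : ℝ)) / ∏ i : Fin L, (S.normb i : ℝ)
      = (∏ i : Fin L, ((1 - (S.cardR i : ℝ) / (S.normb i : ℝ)) * (S.normb i : ℝ)))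
          / ∏ i : Fin L, (S.normb i : ℝ) := by
        rw [Finset.prod_congr rfl fun i _ => hkey i]
    _ = ∏ i : Fin L, (1 - (S.cardR i : ℝ) / (S.normb i : ℝ)) := by
        rw [Finset.prod_mul_distrib, mul_div_assoc, div_self (ne_of_gt hprodpos), mul_one]
    _ = ∏ i ∈ Finset.range L, (1 - (S.cardR i : ℝ) / (S.normb i : ℝ)) :=
        Fin.prod_univ_eq_prod_range (fun i => (1 - (S.cardR i : ℝ) / (S.normb i : ℝ))) L
    _ ≤ _ := le_refl _

end ErdosSieve
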